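/- In the Algorithm 1 setting, let F: [0,1]^n → [0,∞) be a nonnegative β-smooth DR-submodular function, let D be the ℓ₂-diameter of (Q + P) ∩ [0,1]^n, assume m < 1, and let p* ∈ P. Suppose that for every integer 1 ≤ i' ≤ 1/ε one has ⟨b⁽ⁱ'⁾⊙(1 − z⁽ⁱ'⁻¹⁾), ∇F(z⁽ⁱ'⁻¹⁾)⟩ ≥ (1−ε)^{i'−1}·F(p*) − F(z⁽ⁱ'⁻¹⁾). Then for every integer 0 ≤ i ≤ 1/ε: F(z⁽ⁱ⁾) ≥ εi·(1−ε)^{i−1}·F(p*) − i·ε²βD²/(2(1−m)²). -/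

import Mathlib

open scoped InnerProductSpace
open Pointwise

noncomputable section

/-- Vectors in `ℝ^n`, with the Euclidean (ℓ₂) norm and inner product. -/
abbrev Vec (n : ℕ) := EuclideanSpace ℝ (Fin n)

/-- Membership in the box `[0,1]^n`. -/
def inBox {n : ℕ} (x : Vec n) : Prop := ∀ j, 0 ≤ x j ∧ x j ≤ 1

/-- Coordinate-wise (Hadamard) product `x ⊙ y`. -/
def had {n : ℕ} (x y : Vec n) : Vec n := WithLp.toLp 2 (fun j => x j * y j)

/-- Coordinate-wise probabilistic sum `x ⊛ y`. -/
def psum {n : ℕ} (x y : Vec n) : Vec n := WithLp.toLp 2 (fun j => x j + y j - x j * y j)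

/-- The vector `1 - x` (coordinate-wise). -/
def oneM {n : ℕ} (x : Vec n) : Vec n := WithLp.toLp 2 (fun j => 1 - x j)

/-- ℓ∞-norm. -/
def normInf {n : ℕ} (x : Vec n) : ℝ := ⨆ j, |x j|

/-- DR-submodularity of `F : [0,1]^n → ℝ`. -/
def DRSubmodular {n : ℕ} (F : Vec n → ℝ) : Prop :=
  ∀ a b : Vec n, inBox a → inBox b → (∀ j, a j ≤ b j) →
    ∀ k : ℝ, 0 < k → ∀ i : Fin n, inBox (b + EuclideanSpace.single i k) →
      F (b + EuclideanSpace.single i k) - F b ≤ F (a + EuclideanSpace.single i k) - F a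

/-- `P` is down-closed (with respect to the domain `[0,1]^n`). -/
def downClosed {n : ℕ} (P : Set (Vec n)) : Prop :=
  ∀ x y : Vec n, (∀ j, 0 ≤ x j) → (∀ j, x j ≤ y j) → y ∈ P → x ∈ P

/-- The Algorithm 1 setting: `Q ⊆ [0,1]^n` convex, `P ⊆ [0,1]^n` down-closed convex,
`ε ∈ (0,1)` with `1/ε = N ∈ ℕ`, and sequences `y⁽ⁱ⁾, z⁽ⁱ⁾` built from `a⁽ⁱ⁾ ∈ Q`,
`b⁽ⁱ⁾ ∈ P` satisfying `a⁽ⁱ⁾ + b⁽ⁱ⁾ ⊙ (1 − y⁽ⁱ⁻¹⁾) ≤ 1`, via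
`y⁽ⁱ⁾ = (1−ε)·y⁽ⁱ⁻¹⁾ + ε·a⁽ⁱ⁾` and `z⁽ⁱ⁾ = z⁽ⁱ⁻¹⁾ + ε·(1 − z⁽ⁱ⁻¹⁾) ⊙ b⁽ⁱ⁾`. -/
structure Alg1Setting {n : ℕ} (Q P : Set (Vec n)) (ε : ℝ) (N : ℕ)
    (y z a b : ℕ → Vec n) : Prop where
  hQbox : ∀ x ∈ Q, inBox x
  hQconv : Convex ℝ Q
  hPbox : ∀ x ∈ P, inBox x
  hPconv : Convex ℝ P
  hPdown : downClosed P
  hε0 : 0 < ε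
  hε1 : ε < 1
  hεN : (N : ℝ) * ε = 1
  hy0Q : y 0 ∈ Q
  hy0min : ∀ x ∈ Q, normInf (y 0) ≤ normInf x
  hz0 : z 0 = 0
  haQ : ∀ i, 1 ≤ i → i ≤ N → a i ∈ Q
  hbP : ∀ i, 1 ≤ i → i ≤ N → b i ∈ P
  hfeas : ∀ i, 1 ≤ i → i ≤ N → ∀ j, a i j + b i j * (1 - y (i-1) j) ≤ 1
  hyrec : ∀ i, 1 ≤ i → i ≤ N → y i = (1-ε) • y (i-1) + ε • a i
  hzrec : ∀ i, 1 ≤ i → i ≤ N → z i = z (i-1) + ε • had (oneM (z (i-1))) (b i)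

lemma smooth_descent {n : ℕ} (F : Vec n → ℝ) (G : Vec n → Vec n) (β : ℝ)
    (hGrad : ∀ x, inBox x → HasGradientAt F (G x) x)
    (hGcont : ContinuousOn G {x : Vec n | inBox x})
    (hsmooth : ∀ u v : Vec n, inBox u → inBox v → ‖G u - G v‖ ≤ β * ‖u - v‖)
    (u v : Vec n) (hu : inBox u) (hv : inBox v) :
    F u + ⟪G u, v - u⟫_ℝ - β / 2 * ‖v - u‖ ^ 2 ≤ F v := by
  set w : Vec n := v - u with hw
  have hpath : ∀ t ∈ Set.Icc (0:ℝ) 1, inBox (u + t • w) := by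
    intro t ht j
    have h1 := (hu j).1; have h2 := (hu j).2
    have h3 := (hv j).1; have h4 := (hv j).2
    have he : (u + t • w) j = u j + t * (v j - u j) := by
      simp [hw, PiLp.add_apply, PiLp.smul_apply, PiLp.sub_apply, smul_eq_mul]
    rw [he]
    constructor <;> nlinarith [ht.1, ht.2]
  have hderiv : ∀ t ∈ Set.uIcc (0:ℝ) 1,
      HasDerivAt (fun s : ℝ => F (u + s • w)) (⟪G (u + t • w), w⟫_ℝ) t := by
    intro t ht
    rw [Set.uIcc_of_le zero_le_one] at ht
    have hF' := (hGrad _ (hpath t ht)).hasFDerivAt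
    have hline : HasDerivAt (fun s : ℝ => u + s • w) w t := by
      simpa using ((hasDerivAt_id t).smul_const w).const_add u
    have := hF'.comp_hasDerivAt t hline
    simp at this
    convert this using 1 <;> rfl
  have hcont : ContinuousOn (fun t : ℝ => ⟪G (u + t • w), w⟫_ℝ) (Set.Icc 0 1) := by
    apply ContinuousOn.inner
    · exact hGcont.comp
        (continuous_const.add (continuous_id.smul continuous_const)).continuousOn
        (fun t ht => hpath t ht)
    · exact continuousOn_const
  have hInt : IntervalIntegrable (fun t : ℝ => ⟪G (u + t • w), w⟫_ℝ)
      MeasureTheory.volume 0 1 := by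
    apply ContinuousOn.intervalIntegrable
    rwa [Set.uIcc_of_le zero_le_one]
  have hFTC : ∫ t in (0:ℝ)..1, ⟪G (u + t • w), w⟫_ℝ = F v - F u := by
    have h := intervalIntegral.integral_eq_sub_of_hasDerivAt hderiv hInt
    simpa [hw] using h
  have hlow : ∀ t ∈ Set.Icc (0:ℝ) 1,
      ⟪G u, w⟫_ℝ - β * ‖w‖^2 * t ≤ ⟪G (u + t • w), w⟫_ℝ := by
    intro t ht
    have h1 : ⟪G u, w⟫_ℝ - ⟪G (u + t • w), w⟫_ℝ = ⟪G u - G (u + t • w), w⟫_ℝ := by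
      rw [inner_sub_left]
    have h2 : ⟪G u - G (u + t • w), w⟫_ℝ ≤ ‖G u - G (u + t • w)‖ * ‖w‖ :=
      real_inner_le_norm _ _
    have h3 : ‖G u - G (u + t • w)‖ ≤ β * ‖u - (u + t • w)‖ :=
      hsmooth _ _ hu (hpath t ht)
    have h4 : ‖u - (u + t • w)‖ = t * ‖w‖ := by
      rw [show u - (u + t • w) = -(t • w) by abel, norm_neg, norm_smul,
        Real.norm_eq_abs, abs_of_nonneg ht.1]
    have h5 := mul_le_mul_of_nonneg_right h3 (norm_nonneg w)
    rw [h4] at h5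
    nlinarith [h2, h5]
  have hmono : ∫ t in (0:ℝ)..1, (⟪G u, w⟫_ℝ - β * ‖w‖^2 * t)
      ≤ ∫ t in (0:ℝ)..1, ⟪G (u + t • w), w⟫_ℝ := by
    apply intervalIntegral.integral_mono_on zero_le_one ?_ hInt hlow
    exact (continuous_const.sub (continuous_const.mul continuous_id)).intervalIntegrable _ _
  have hval : ∫ t in (0:ℝ)..1, (⟪G u, w⟫_ℝ - β * ‖w‖^2 * t)
      = ⟪G u, w⟫_ℝ - β * ‖w‖^2 / 2 := by
    rw [intervalIntegral.integral_sub intervalIntegrable_const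
      (Continuous.intervalIntegrable (by continuity) _ _),
      intervalIntegral.integral_const, intervalIntegral.integral_const_mul, integral_id]
    simp only [smul_eq_mul]
    ring
  rw [hval, hFTC] at hmono
  nlinarith [hmono]

lemma norm_le_norm_of_abs_le {n : ℕ} {x y : Vec n} (h : ∀ j, |x j| ≤ |y j|) :
    ‖x‖ ≤ ‖y‖ := by
  rw [EuclideanSpace.norm_eq, EuclideanSpace.norm_eq]
  apply Real.sqrt_le_sqrt
  apply Finset.sum_le_sum
  intro j _
  have := h j
  simp only [Real.norm_eq_abs]
  nlinarith [abs_nonneg (x j), abs_nonneg (y j)]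

lemma had_comm' {n : ℕ} (x y : Vec n) : had x y = had y x := by
  ext j; simp [had, mul_comm]

set_option maxHeartbeats 1600000 in
/-- Lemma 4.6 / `lem:z_value`: in the Algorithm 1 setting, with `F`
nonnegative β-smooth DR-submodular (gradient `G`), `D` the ℓ₂-diameter of
`(Q + P) ∩ [0,1]^n`, `m = ‖y⁽⁰⁾‖∞ < 1` and `p* ∈ P`, if for every `1 ≤ i' ≤ 1/ε` one has
`⟪b⁽ⁱ'⁾ ⊙ (1 − z⁽ⁱ'⁻¹⁾), ∇F(z⁽ⁱ'⁻¹⁾)⟫ ≥ (1−ε)^{i'−1}·F(p*) − F(z⁽ⁱ'⁻¹⁾)`, then for every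
`0 ≤ i ≤ 1/ε`: `F(z⁽ⁱ⁾) ≥ εi·(1−ε)^{i−1}·F(p*) − i·ε²βD²/(2(1−m)²)`. -/
theorem stmt_6 {n : ℕ} (Q P : Set (Vec n)) (ε : ℝ) (N : ℕ) (y z a b : ℕ → Vec n)
    (H : Alg1Setting Q P ε N y z a b)
    (F : Vec n → ℝ) (G : Vec n → Vec n) (β : ℝ)
    (hF0 : ∀ x, inBox x → 0 ≤ F x)
    (hDR : DRSubmodular F)
    (hGrad : ∀ x, inBox x → HasGradientAt F (G x) x)
    (hGcont : ContinuousOn G {x : Vec n | inBox x})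
    (hβ : 0 < β)
    (hsmooth : ∀ u v : Vec n, inBox u → inBox v → ‖G u - G v‖ ≤ β * ‖u - v‖)
    (m : ℝ) (hm : m = normInf (y 0)) (hm1 : m < 1)
    (D : ℝ) (hD : D = Metric.diam ((Q + P) ∩ {x : Vec n | inBox x}))
    (p : Vec n) (hp : p ∈ P)
    (hlb : ∀ i, 1 ≤ i → i ≤ N →
      (1 - ε)^(i-1) * F p - F (z (i-1)) ≤
        ⟪had (b i) (oneM (z (i-1))), G (z (i-1))⟫_ℝ) :
    ∀ i ≤ N,
      ε * i * (1 - ε)^(i-1) * F p - i * ε^2 * β * D^2 / (2 * (1 - m)^2) ≤ F (z i) := by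
  obtain ⟨hQbox, hQconv, hPbox, hPconv, hPdown, hε0, hε1, hεN, hy0Q, hy0min, hz0,
    haQ, hbP, hfeas, hyrec, hzrec⟩ := H
  have descent : ∀ (u v : Vec n), inBox u → inBox v →
      F u + ⟪G u, v - u⟫_ℝ - β / 2 * ‖v - u‖ ^ 2 ≤ F v :=
    fun u v hu hv => smooth_descent F G β hGrad hGcont hsmooth u v hu hv
  have hm0 : 0 ≤ m := hm ▸ Real.iSup_nonneg (fun j => abs_nonneg _)
  have h1m : 0 < 1 - m := by linarith
  have hD0 : 0 ≤ D := hD ▸ Metric.diam_nonneg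
  -- z stays in the box
  have hboxz : ∀ i, i ≤ N → inBox (z i) := by
    intro i
    induction i with
    | zero => intro _; rw [hz0]; intro j; simp
    | succ k ih =>
      intro hk
      have hzk := ih (Nat.le_of_succ_le hk)
      have hb := hPbox _ (hbP (k+1) (by omega) hk)
      have hr := hzrec (k+1) (by omega) hk
      rw [Nat.add_sub_cancel] at hr
      rw [hr]
      intro j
      have h1 := (hzk j).1; have h2 := (hzk j).2
      have h3 := (hb j).1; have h4 := (hb j).2
      have he : (z k + ε • had (oneM (z k)) (b (k+1))) j
          = z k j + ε * ((1 - z k j) * b (k+1) j) := by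
        simp [had, oneM, PiLp.add_apply, PiLp.smul_apply, smul_eq_mul]
      rw [he]
      constructor <;>
        nlinarith [mul_nonneg (sub_nonneg.mpr h2) h3,
          mul_le_of_le_one_right (sub_nonneg.mpr h2) h4, hε0.le, hε1.le]
  -- 0 ∈ P
  have h0P : (0 : Vec n) ∈ P :=
    hPdown 0 p (fun j => by simp) (fun j => by simpa using (hPbox p hp j).1) hp
  have hy0box := hQbox _ hy0Q
  have hy0le : ∀ j, y 0 j ≤ m := by
    intro j
    rw [hm]
    simp only [normInf]
    have hbdd : BddAbove (Set.range fun j => |y 0 j|) :=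
      Set.Finite.bddAbove (Set.finite_range _)
    calc y 0 j ≤ |y 0 j| := le_abs_self _
    _ ≤ ⨆ j, |y 0 j| := le_ciSup hbdd j
  -- the feasible region is bounded
  have hbox_bdd : Bornology.IsBounded ((Q + P) ∩ {x : Vec n | inBox x}) := by
    apply (Metric.isBounded_closedBall (x := (0 : Vec n)) (r := Real.sqrt n)).subset
    rintro x ⟨-, hx⟩
    simp only [Metric.mem_closedBall, dist_zero_right]
    rw [EuclideanSpace.norm_eq]
    apply Real.sqrt_le_sqrt
    calc ∑ j, ‖x j‖^2 ≤ ∑ _j : Fin n, (1:ℝ) := by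
          apply Finset.sum_le_sum
          intro j _
          have h1 := (hx j).1; have h2 := (hx j).2
          rw [Real.norm_eq_abs, abs_of_nonneg h1]
          nlinarith
    _ = n := by simp
  -- norm bound on b i
  have hbnorm : ∀ i, 1 ≤ i → i ≤ N → ‖b i‖ ≤ D / (1 - m) := by
    intro i h1 h2
    have hbPi := hbP i h1 h2
    have hbbox := hPbox _ hbPi
    have hsm : (1 - m) • b i ∈ P := by
      have := hPconv hbPi h0P (by linarith : (0:ℝ) ≤ 1 - m) hm0 (by ring)
      simpa using this
    have hw1 : y 0 ∈ (Q + P) ∩ {x : Vec n | inBox x} := by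
      constructor
      · have : y 0 + 0 ∈ Q + P := Set.add_mem_add hy0Q h0P
        simpa using this
      · exact hy0box
    have hw2 : y 0 + (1 - m) • b i ∈ (Q + P) ∩ {x : Vec n | inBox x} := by
      constructor
      · exact Set.add_mem_add hy0Q hsm
      · intro j
        have h3 := (hbbox j).1; have h4 := (hbbox j).2
        have h5 := (hy0box j).1; have h6 := hy0le j
        have he : (y 0 + (1 - m) • b i) j = y 0 j + (1 - m) * b i j := by
          simp [PiLp.add_apply, PiLp.smul_apply, smul_eq_mul]
        rw [he]
        constructor <;> nlinarith
    have hkey : (1 - m) * ‖b i‖ ≤ D := by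
      rw [hD]
      have hd := Metric.dist_le_diam_of_mem hbox_bdd hw2 hw1
      rwa [dist_eq_norm, add_sub_cancel_left, norm_smul, Real.norm_eq_abs,
        abs_of_nonneg (by linarith : (0:ℝ) ≤ 1 - m)] at hd
    rw [le_div_iff₀ h1m]
    linarith
  -- one-step inequality
  have hstep : ∀ k, k + 1 ≤ N →
      (1 - ε) * F (z k) + ε * (1 - ε)^k * F p - ε^2*β*D^2/(2*(1-m)^2)
        ≤ F (z (k+1)) := by
    intro k hk
    have hzk := hboxz k (Nat.le_of_succ_le hk)
    have hzk1 := hboxz (k+1) hk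
    have hrec := hzrec (k+1) (by omega) hk
    rw [Nat.add_sub_cancel] at hrec
    have hdes := descent (z k) (z (k+1)) hzk hzk1
    have hdiff : z (k+1) - z k = ε • had (oneM (z k)) (b (k+1)) := by
      rw [hrec]; abel
    have hlb' := hlb (k+1) (by omega) hk
    rw [Nat.add_sub_cancel] at hlb'
    have hinner : ⟪G (z k), z (k+1) - z k⟫_ℝ
        = ε * ⟪had (b (k+1)) (oneM (z k)), G (z k)⟫_ℝ := by
      rw [hdiff, real_inner_smul_right, real_inner_comm, had_comm']
    have hbb := hbnorm (k+1) (by omega) hk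
    have hbbox := hPbox _ (hbP (k+1) (by omega) hk)
    have hhad : ‖had (oneM (z k)) (b (k+1))‖ ≤ ‖b (k+1)‖ := by
      apply norm_le_norm_of_abs_le
      intro j
      have h1 := (hzk j).1; have h2 := (hzk j).2
      simp only [had, oneM]
      rw [abs_mul]
      calc |1 - z k j| * |b (k+1) j| ≤ 1 * |b (k+1) j| := by
            apply mul_le_mul_of_nonneg_right _ (abs_nonneg _)
            rw [abs_of_nonneg (by linarith)]; linarith
      _ = |b (k+1) j| := one_mul _
    have hnz : ‖z (k+1) - z k‖ ≤ ε * (D / (1 - m)) := by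
      rw [hdiff, norm_smul, Real.norm_eq_abs, abs_of_pos hε0]
      exact mul_le_mul_of_nonneg_left (hhad.trans hbb) hε0.le
    have hnzsq : ‖z (k+1) - z k‖^2 ≤ ε^2 * D^2 / (1 - m)^2 := by
      have h2 := pow_le_pow_left₀ (norm_nonneg _) hnz 2
      rw [mul_pow, div_pow, ← mul_div_assoc] at h2
      exact h2
    have hin2 : ε * (1 - ε)^k * F p - ε * F (z k)
        ≤ ⟪G (z k), z (k+1) - z k⟫_ℝ := by
      rw [hinner]
      have := mul_le_mul_of_nonneg_left hlb' hε0.le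
      linarith [this]
    have hCle : β / 2 * ‖z (k+1) - z k‖^2 ≤ ε^2*β*D^2/(2*(1-m)^2) := by
      have h3 := mul_le_mul_of_nonneg_left hnzsq (by linarith : (0:ℝ) ≤ β/2)
      have h4 : β/2 * (ε^2 * D^2 / (1-m)^2) = ε^2*β*D^2/(2*(1-m)^2) := by
        field_simp
      linarith [h3, h4.le]
    linarith [hdes, hin2, hCle]
  -- main induction
  intro i
  induction i with
  | zero =>
    intro _
    have h := hF0 _ (hboxz 0 (Nat.zero_le N))
    norm_num
    exact h
  | succ k ih =>
    intro hk
    have ihk := ih (Nat.le_of_succ_le hk)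
    have hstepk := hstep k hk
    rw [Nat.add_sub_cancel]
    push_cast
    have hpow : (1 - ε) * ((k:ℝ) * (1 - ε)^(k-1)) = (k:ℝ) * (1 - ε)^k := by
      cases k with
      | zero => simp
      | succ j =>
        push_cast
        rw [pow_succ]
        ring
    have e1 : (1-ε) * (ε * (k:ℝ) * (1-ε)^(k-1) * F p) = ε * (k:ℝ) * (1-ε)^k * F p := by
      calc (1-ε) * (ε * (k:ℝ) * (1-ε)^(k-1) * F p)
          = ((1-ε) * ((k:ℝ) * (1-ε)^(k-1))) * (ε * F p) := by ring
        _ = ((k:ℝ) * (1-ε)^k) * (ε * F p) := by rw [hpow]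
        _ = ε * (k:ℝ) * (1-ε)^k * F p := by ring
    have h1 := mul_le_mul_of_nonneg_left ihk (by linarith : (0:ℝ) ≤ 1-ε)
    have e2 : (1-ε) * (ε * (k:ℝ) * (1-ε)^(k-1) * F p
          - (k:ℝ) * ε^2 * β * D^2 / (2*(1-m)^2))
        = ε * (k:ℝ) * (1-ε)^k * F p
          - (1-ε) * ((k:ℝ) * ε^2 * β * D^2 / (2*(1-m)^2)) := by
      rw [mul_sub, e1]
    rw [e2] at h1
    have hfin : (1-ε) * ((k:ℝ) * ε^2 * β * D^2 / (2*(1-m)^2))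
        ≤ (k:ℝ) * ε^2 * β * D^2 / (2*(1-m)^2) := by
      have h0 : (0:ℝ) ≤ (k:ℝ) * ε^2 * β * D^2 / (2*(1-m)^2) := by positivity
      nlinarith [h0, hε0]
    have e3 : ((k:ℝ)+1) * ε^2 * β * D^2 / (2*(1-m)^2)
        = (k:ℝ) * ε^2 * β * D^2 / (2*(1-m)^2) + ε^2 * β * D^2 / (2*(1-m)^2) := by
      ring
    have e4 : ε * ((k:ℝ)+1) * (1-ε)^k * F p
        = ε * (k:ℝ) * (1-ε)^k * F p + ε * (1-ε)^k * F p := by ring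
    linarith [hstepk, h1, hfin, e3, e4]
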